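/- A group G acting regularly on a set is join-coherent if and only if G is locally cyclic. -/

import Mathlib

/-- The orbit partition of a permutation `g`, as a setoid on `Ω`. -/
def piPart {Ω : Type*} (g : Equiv.Perm Ω) : Setoid Ω :=
  MulAction.orbitRel (Subgroup.zpowers g) Ω

/-- The set of orbit partitions of elements of a permutation group `G`. -/
def piSet {Ω : Type*} (G : Subgroup (Equiv.Perm Ω)) : Set (Setoid Ω) :=
  {P | ∃ g ∈ G, piPart g = P}

/-- `G` is join-coherent if its set of orbit partitions is closed under joins. -/
def JoinCoherent {Ω : Type*} (G : Subgroup (Equiv.Perm Ω)) : Prop :=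
  ∀ P ∈ piSet G, ∀ Q ∈ piSet G, P ⊔ Q ∈ piSet G

/-- `G` is meet-coherent if its set of orbit partitions is closed under meets. -/
def MeetCoherent {Ω : Type*} (G : Subgroup (Equiv.Perm Ω)) : Prop :=
  ∀ P ∈ piSet G, ∀ Q ∈ piSet G, P ⊓ Q ∈ piSet G

private lemma orbitRel_mono {Ω : Type*} {H K : Subgroup (Equiv.Perm Ω)} (h : H ≤ K) :
    MulAction.orbitRel H Ω ≤ MulAction.orbitRel K Ω := by
  rw [Setoid.le_def]
  intro x y hxy
  obtain ⟨⟨k, hk⟩, rfl⟩ := hxy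
  exact ⟨⟨k, h hk⟩, rfl⟩

private lemma rel_sup_apply {Ω : Type*} {H K : Subgroup (Equiv.Perm Ω)} {k : Equiv.Perm Ω}
    (hk : k ∈ H ⊔ K) :
    ∀ y : Ω, (MulAction.orbitRel H Ω ⊔ MulAction.orbitRel K Ω) (k y) y := by
  rw [Subgroup.sup_eq_closure] at hk
  induction hk using Subgroup.closure_induction with
  | mem x hx =>
    intro y
    rcases hx with hx | hx
    · exact Setoid.le_def.mp le_sup_left ⟨⟨x, hx⟩, rfl⟩
    · exact Setoid.le_def.mp le_sup_right ⟨⟨x, hx⟩, rfl⟩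
  | one =>
    intro y
    exact Setoid.refl' _ _
  | mul a b ha hb iha ihb =>
    intro y
    exact Setoid.trans' _ (iha (b y)) (ihb y)
  | inv a ha iha =>
    intro y
    have := iha (a⁻¹ y)
    rw [← Equiv.Perm.mul_apply, mul_inv_cancel, Equiv.Perm.one_apply] at this
    exact Setoid.symm' _ this

private lemma orbitRel_sup {Ω : Type*} (H K : Subgroup (Equiv.Perm Ω)) :
    MulAction.orbitRel ↥(H ⊔ K) Ω = MulAction.orbitRel H Ω ⊔ MulAction.orbitRel K Ω := by
  apply le_antisymm
  · rw [Setoid.le_def]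
    intro x y hxy
    obtain ⟨⟨k, hk⟩, rfl⟩ := hxy
    exact rel_sup_apply hk y
  · exact sup_le (orbitRel_mono le_sup_left) (orbitRel_mono le_sup_right)

private lemma zpowers_sup {M : Type*} [Group M] (c : M) (m n : ℤ) :
    Subgroup.zpowers (c ^ m) ⊔ Subgroup.zpowers (c ^ n)
      = Subgroup.zpowers (c ^ (Int.gcd m n : ℤ)) := by
  apply le_antisymm
  · apply sup_le <;> rw [Subgroup.zpowers_le]
    · exact ⟨m / (Int.gcd m n : ℤ), by
        show (c ^ (Int.gcd m n : ℤ)) ^ (m / (Int.gcd m n : ℤ)) = c ^ m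
        rw [← zpow_mul, Int.mul_ediv_cancel' (Int.gcd_dvd_left _ _)]⟩
    · exact ⟨n / (Int.gcd m n : ℤ), by
        show (c ^ (Int.gcd m n : ℤ)) ^ (n / (Int.gcd m n : ℤ)) = c ^ n
        rw [← zpow_mul, Int.mul_ediv_cancel' (Int.gcd_dvd_right _ _)]⟩
  · rw [Subgroup.zpowers_le]
    have hb : c ^ (Int.gcd m n : ℤ) = (c ^ m) ^ Int.gcdA m n * (c ^ n) ^ Int.gcdB m n := by
      rw [← zpow_mul, ← zpow_mul, ← zpow_add, ← Int.gcd_eq_gcd_ab]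
    rw [hb]
    exact mul_mem
        (Subgroup.mem_sup_left (Subgroup.zpow_mem _ (Subgroup.mem_zpowers _) _))
        (Subgroup.mem_sup_right (Subgroup.zpow_mem _ (Subgroup.mem_zpowers _) _))

/-- A group acting regularly is join-coherent if and only if it is locally cyclic. -/
theorem regular_joinCoherent_iff_locallyCyclic {Ω : Type*} (G : Subgroup (Equiv.Perm Ω))
    (htrans : ∀ a b : Ω, ∃ g ∈ G, g a = b)
    (hfree : ∀ g ∈ G, ∀ ω : Ω, g ω = ω → g = 1) :
    JoinCoherent G ↔
      ∀ a b : ↥G, ∃ c : ↥G, a ∈ Subgroup.zpowers c ∧ b ∈ Subgroup.zpowers c := by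
  rcases isEmpty_or_nonempty Ω with hΩ | hΩ
  · have hperm : ∀ x y : Equiv.Perm Ω, x = y := fun x y =>
      Equiv.ext fun ω => isEmptyElim ω
    have hsetoid : ∀ P Q : Setoid Ω, P = Q := fun P Q =>
      Setoid.ext fun x => isEmptyElim x
    constructor
    · intro _ a b
      refine ⟨1, ⟨0, ?_⟩, ⟨0, ?_⟩⟩ <;> exact Subtype.ext (hperm _ _)
    · intro _ P hP Q hQ
      obtain ⟨g, hg, rfl⟩ := hP
      exact ⟨g, hg, hsetoid _ _⟩
  · obtain ⟨ω₀⟩ := hΩ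
    constructor
    · intro hJC a b
      obtain ⟨c, hcG, hc⟩ := hJC (piPart (a : Equiv.Perm Ω)) ⟨a, a.2, rfl⟩
        (piPart (b : Equiv.Perm Ω)) ⟨b, b.2, rfl⟩
      have key : ∀ g : Equiv.Perm Ω, g ∈ G →
          (piPart (a : Equiv.Perm Ω) ⊔ piPart (b : Equiv.Perm Ω)) (g ω₀) ω₀ →
          ∃ n : ℤ, c ^ n = g := by
        intro g hg hrel
        rw [← hc] at hrel
        obtain ⟨k, hk⟩ := hrel
        obtain ⟨n, hn⟩ := Subgroup.mem_zpowers_iff.mp k.2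
        refine ⟨n, ?_⟩
        have hfix : ((c ^ n)⁻¹ * g) ω₀ = ω₀ := by
          have hk' : (c ^ n) ω₀ = g ω₀ := by rw [hn]; exact hk
          simp [Equiv.Perm.mul_apply, ← hk']
        have h1 : (c ^ n)⁻¹ * g = 1 :=
          hfree _ (mul_mem (inv_mem (Subgroup.zpow_mem G hcG n)) hg) ω₀ hfix
        rw [inv_mul_eq_one] at h1
        exact h1
      have ha : ∃ n : ℤ, c ^ n = (a : Equiv.Perm Ω) :=
        key _ a.2 (Setoid.le_def.mp le_sup_left
          ⟨⟨(a : Equiv.Perm Ω), Subgroup.mem_zpowers _⟩, rfl⟩)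
      have hb : ∃ n : ℤ, c ^ n = (b : Equiv.Perm Ω) :=
        key _ b.2 (Setoid.le_def.mp le_sup_right
          ⟨⟨(b : Equiv.Perm Ω), Subgroup.mem_zpowers _⟩, rfl⟩)
      obtain ⟨na, hna⟩ := ha
      obtain ⟨nb, hnb⟩ := hb
      refine ⟨⟨c, hcG⟩, ⟨na, ?_⟩, ⟨nb, ?_⟩⟩ <;>
        · apply Subtype.ext
          push_cast
          assumption
    · intro hLC P hP Q hQ
      obtain ⟨g, hg, rfl⟩ := hP
      obtain ⟨h, hh, rfl⟩ := hQ
      obtain ⟨c, hcg, hch⟩ := hLC ⟨g, hg⟩ ⟨h, hh⟩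
      obtain ⟨m, hm⟩ := Subgroup.mem_zpowers_iff.mp hcg
      obtain ⟨n, hn⟩ := Subgroup.mem_zpowers_iff.mp hch
      have hm' : (c : Equiv.Perm Ω) ^ m = g := by
        have := congrArg (Subtype.val) hm
        push_cast at this
        exact this
      have hn' : (c : Equiv.Perm Ω) ^ n = h := by
        have := congrArg (Subtype.val) hn
        push_cast at this
        exact this
      refine ⟨(c : Equiv.Perm Ω) ^ (Int.gcd m n : ℤ),
        Subgroup.zpow_mem G c.2 _, ?_⟩
      have hz : Subgroup.zpowers g ⊔ Subgroup.zpowers h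
          = Subgroup.zpowers ((c : Equiv.Perm Ω) ^ (Int.gcd m n : ℤ)) := by
        rw [← hm', ← hn', zpowers_sup]
      unfold piPart
      rw [← hz, orbitRel_sup]
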